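/- Subset-construction step correspondence: let A = (Σ, Q, Q_f, Q₀, Δ, γ) be a GNFSTA with pure states and A' = (Σ', 2^Q, Q'_f, Q₀, Δ') the subset-construction DFSTA (with Σ' = {{a} | a ∈ Σ}, Q'_f = {q' | q' ∩ Q_f ≠ ∅}, Δ'(a', b') = {c | (a,b) → c ∈ Δ, a ∈ a', b ∈ γ(b')}, where γ is extended by γ(a) = {a} for a ∈ Σ and unions over sets). For t ∈ T(Σ) with counterpart t' ∈ T(Σ'), let stepsⁿ_A(t) = {v | t ⇒ⁿ v} and stepsⁿ_{A'}(t') = {v' | t' ⇒ⁿ_{A'} v'}. Then for every n: every v ∈ stepsⁿ_A(t) is an instance of Γ(v') for some v' ∈ stepsⁿ_{A'}(t'), and conversely, for every v' ∈ stepsⁿ_{A'}(t'), every instance of Γ(v') belongs to stepsⁿ_A(t). -/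
import Mathlib


/-!  Common definitions: string trees over an alphabet (following
N. Schmidt, A. Patel, "Using Tree Automata and Regular Expressions to
Manipulate Hierarchically Structured Data").

Symbols: an ambient type `U` of "plain" symbols, extended with the two
angle brackets and the slash. -/

inductive TSym (U : Type) : Type where
  | op : TSym U          -- ⟨
  | cl : TSym U          -- ⟩
  | slash : TSym U       -- /
  | ltr : U → TSym U     -- a plain symbol

namespace StringTree

variable {U V : Type}

/-- The letters of an alphabet `S ⊆ U`, viewed as (non-bracket) symbols. -/
def ltrs (S : Set U) : Set (TSym U) := {x | ∃ a ∈ S, x = TSym.ltr a}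

/-- String trees over a set `S` of allowed non-bracket symbols:
`⟨⟩ ∈ T`, `⟨a⟩ ∈ T` for `a ∈ S`, closed under concatenation
`⟨x⟩·⟨y⟩ = ⟨xy⟩` and encapsulation `t ↦ ⟨t⟩`. -/
inductive IsTree (S : Set (TSym U)) : List (TSym U) → Prop where
  | nil : IsTree S [TSym.op, TSym.cl]
  | single {x : TSym U} : x ∈ S → IsTree S [TSym.op, x, TSym.cl]
  | concat {x y : List (TSym U)} :
      IsTree S (TSym.op :: (x ++ [TSym.cl])) → IsTree S (TSym.op :: (y ++ [TSym.cl])) →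
      IsTree S (TSym.op :: ((x ++ y) ++ [TSym.cl]))
  | encap {t : List (TSym U)} : IsTree S t → IsTree S (TSym.op :: (t ++ [TSym.cl]))

/-- `T(Σ)`, the set of string trees over the alphabet `Σ ⊆ U`. -/
def TreeSet (S : Set U) : Set (List (TSym U)) := {t | IsTree (ltrs S) t}

/-- A plain string, viewed as a string of symbols. -/
def strOf (s : List U) : List (TSym U) := s.map TSym.ltr

/-- Move relation of a generalised non-deterministic finite string tree
automaton with initial states `Q0`, horizontal rules `Δ` and vertical
rules `γ`:
(a) `l⟨s⟩r ⇒ l⟨a/s⟩r` if `a ∈ Q0` (initial state assignment);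
(b) `l⟨a/bs⟩r ⇒ l⟨c/s⟩r` if `(a,b) → c ∈ Δ` (horizontal move);
(c) `l⟨a/⟩r ⇒ lbr` if `b ∈ γ a` (vertical move). -/
inductive GMove (Q0 : Set U) (Δ : Set (U × U × U)) (γ : U → Set U) :
    List (TSym U) → List (TSym U) → Prop where
  | init {l r : List (TSym U)} {s : List U} {a : U} :
      a ∈ Q0 →
      GMove Q0 Δ γ (l ++ [TSym.op] ++ strOf s ++ [TSym.cl] ++ r)
        (l ++ [TSym.op, TSym.ltr a, TSym.slash] ++ strOf s ++ [TSym.cl] ++ r)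
  | horiz {l r : List (TSym U)} {s : List U} {a b c : U} :
      (a, b, c) ∈ Δ →
      GMove Q0 Δ γ (l ++ [TSym.op, TSym.ltr a, TSym.slash, TSym.ltr b] ++ strOf s ++ [TSym.cl] ++ r)
        (l ++ [TSym.op, TSym.ltr c, TSym.slash] ++ strOf s ++ [TSym.cl] ++ r)
  | vert {l r : List (TSym U)} {a b : U} :
      b ∈ γ a →
      GMove Q0 Δ γ (l ++ [TSym.op, TSym.ltr a, TSym.slash, TSym.cl] ++ r)
        (l ++ [TSym.ltr b] ++ r)

/-- Move relation of an NFSTA: the GNFSTA moves with the single initial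
state `q0` and with the vertical move `l⟨a/⟩r ⇒ lar`. -/
def NMove (q0 : U) (Δ : Set (U × U × U)) : List (TSym U) → List (TSym U) → Prop :=
  GMove {q0} Δ (fun a => {a})

/-- The final tree `⟨q/⟩`. -/
def finalTree (q : U) : List (TSym U) := [TSym.op, TSym.ltr q, TSym.slash, TSym.cl]

/-- Acceptance by a GNFSTA: `t ⇒* ⟨q_f/⟩` for some `q_f ∈ Q_f`. -/
def GAccepts (Q0 : Set U) (Δ : Set (U × U × U)) (γ : U → Set U) (Qf : Set U)
    (t : List (TSym U)) : Prop :=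
  ∃ qf ∈ Qf, Relation.ReflTransGen (GMove Q0 Δ γ) t (finalTree qf)

/-- The language of a GNFSTA: the set of trees of `T(Σ)` it accepts. -/
def GLang (Sa Q0 : Set U) (Δ : Set (U × U × U)) (γ : U → Set U) (Qf : Set U) :
    Set (List (TSym U)) :=
  {t | t ∈ TreeSet Sa ∧ GAccepts Q0 Δ γ Qf t}

/-- Acceptance by an NFSTA. -/
def NAccepts (q0 : U) (Δ : Set (U × U × U)) (Qf : Set U) (t : List (TSym U)) : Prop :=
  GAccepts {q0} Δ (fun a => {a}) Qf t

/-- The language of an NFSTA. -/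
def NLang (Sa : Set U) (q0 : U) (Δ : Set (U × U × U)) (Qf : Set U) : Set (List (TSym U)) :=
  GLang Sa {q0} Δ (fun a => {a}) Qf

/-- Well-formedness of a GNFSTA `(Σ, Q, Q_f, Q₀, Δ, γ)`:
`Q` is finite, `Σ ⊆ Q`, `Q_f ⊆ Q`, `Q₀ ⊆ Q`, the rules of `Δ` are over `Q`,
and `γ` maps states of `Q` to sets of states of `Q`. -/
def GWF (Sa Q Qf Q0 : Set U) (Δ : Set (U × U × U)) (γ : U → Set U) : Prop :=
  Q.Finite ∧ Sa ⊆ Q ∧ Qf ⊆ Q ∧ Q0 ⊆ Q ∧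
    (∀ p ∈ Δ, p.1 ∈ Q ∧ p.2.1 ∈ Q ∧ p.2.2 ∈ Q) ∧ (∀ q ∈ Q, γ q ⊆ Q)

/-- Well-formedness of an NFSTA `(Σ, Q, Q_f, q₀, Δ)`. -/
def NWF (Sa Q Qf : Set U) (q0 : U) (Δ : Set (U × U × U)) : Prop :=
  Q.Finite ∧ Sa ⊆ Q ∧ Qf ⊆ Q ∧ q0 ∈ Q ∧ ∀ p ∈ Δ, p.1 ∈ Q ∧ p.2.1 ∈ Q ∧ p.2.2 ∈ Q

/-- A GNFSTA has pure states: no horizontal or vertical rule produces a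
symbol of `Σ`, no horizontal rule has its state (first) component in `Σ`,
`γ(a) = ∅` for `a ∈ Σ`, and `Q₀ ∪ Q_f ⊆ Q ∖ Σ`. -/
def PureG (Sa Q Qf Q0 : Set U) (Δ : Set (U × U × U)) (γ : U → Set U) : Prop :=
  (∀ p ∈ Δ, p.1 ∉ Sa ∧ p.2.2 ∉ Sa) ∧ (∀ a ∈ Sa, γ a = ∅) ∧
    (∀ q : U, ∀ p ∈ γ q, p ∉ Sa) ∧ Q0 ⊆ Q \ Sa ∧ Qf ⊆ Q \ Sa

/-- An NFSTA has pure states. -/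
def PureN (Sa Q Qf : Set U) (q0 : U) (Δ : Set (U × U × U)) : Prop :=
  (∀ p ∈ Δ, p.1 ∉ Sa ∧ p.2.2 ∉ Sa) ∧ q0 ∈ Q \ Sa ∧ Qf ⊆ Q \ Sa


/-! Additional notions. -/

/-- `⟨s₀ t₁ s₁ ⋯ tₙ sₙ⟩`: the string tree assembled from a head string `s₀`
and a list of pairs `(tᵢ, sᵢ)` of a subtree and a following string. -/
def flatRep (s0 : List U) (rest : List (List (TSym U) × List U)) : List (TSym U) :=
  TSym.op :: (strOf s0 ++ (rest.map (fun p => p.1 ++ strOf p.2)).flatten ++ [TSym.cl])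

/-- The inner string of a tree `⟨x⟩`, i.e. `x`. -/
def innerStr (t : List (TSym U)) : List (TSym U) := (t.drop 1).dropLast

/-- Tree concatenation `⟨x⟩·⟨y⟩ = ⟨xy⟩`. -/
def tconc (u v : List (TSym U)) : List (TSym U) :=
  TSym.op :: ((innerStr u ++ innerStr v) ++ [TSym.cl])

/-- The null tree `⟨⟩`. -/
def nilTree : List (TSym U) := [TSym.op, TSym.cl]

/-- `w` is a string over `Q ∪ {/}`. -/
def OverQSlash (Q : Set U) (w : List (TSym U)) : Prop :=
  ∀ x ∈ w, x = TSym.slash ∨ ∃ q ∈ Q, x = TSym.ltr q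

/-- Renaming of symbols along a map of plain symbols. -/
def symRel (f : U → V) : TSym U → TSym V
  | TSym.op => TSym.op
  | TSym.cl => TSym.cl
  | TSym.slash => TSym.slash
  | TSym.ltr a => TSym.ltr (f a)

/-- Renaming of the symbols of a tree along a map of plain symbols. -/
def treeRel (f : U → V) (t : List (TSym U)) : List (TSym V) := t.map (symRel f)

/-- The injective renaming `a ↦ {a}`. -/
def sing : U → Set U := fun a => {a}

/-- The vertical-rule function `γ` of a pure-state GNFSTA, extended by
`γ(a) = {a}` for `a ∈ Σ` and to sets by unions: `γ(b') = ⋃_{b ∈ b'} γ(b)`. -/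
def gammaExt (Sa : Set U) (γ : U → Set U) (b' : Set U) : Set U :=
  {c | ∃ b ∈ b', c ∈ γ b ∨ (c = b ∧ b ∈ Sa)}

/-- The transition function of the subset construction:
`Δ'(a', b') = {c | (a,b) → c ∈ Δ, a ∈ a', b ∈ γ(b')}`. -/
def subsetDelta (Sa : Set U) (γ : U → Set U) (Δ : Set (U × U × U)) (a' b' : Set U) : Set U :=
  {c | ∃ a ∈ a', ∃ b ∈ gammaExt Sa γ b', (a, b, c) ∈ Δ}

/-- The rule set of the subset-construction DFSTA, defined on pairs of
subsets of `Q`. -/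
def subsetRules (Sa : Set U) (γ : U → Set U) (Δ : Set (U × U × U)) (Q : Set U) :
    Set (Set U × Set U × Set U) :=
  {x | x.1 ⊆ Q ∧ x.2.1 ⊆ Q ∧ x.2.2 = subsetDelta Sa γ Δ x.1 x.2.1}

/-- A rule set is deterministic: at most one rule per left-hand side. -/
def Deterministic {α : Type} (Δ : Set (α × α × α)) : Prop :=
  ∀ a b c₁ c₂, (a, b, c₁) ∈ Δ → (a, b, c₂) ∈ Δ → c₁ = c₂

/-- `L` is recognised by some GNFSTA over the alphabet `Sa`. -/
def RecogG (Sa : Set U) (L : Set (List (TSym U))) : Prop :=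
  ∃ Q Qf Q0 Δ γ, GWF Sa Q Qf Q0 Δ γ ∧ GLang Sa Q0 Δ γ Qf = L

/-- `L` is recognised by some NFSTA over the alphabet `Sa`. -/
def RecogN (Sa : Set U) (L : Set (List (TSym U))) : Prop :=
  ∃ Q Qf q0 Δ, NWF Sa Q Qf q0 Δ ∧ NLang Sa q0 Δ Qf = L

/-- `L` is recognised, after the injective alphabet renaming `a ↦ {a}`,
by some deterministic FSTA. -/
def RecogD (Sa : Set U) (L : Set (List (TSym U))) : Prop :=
  ∃ (Q' Qf' : Set (Set U)) (q0' : Set U) (Δ' : Set (Set U × Set U × Set U)),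
    NWF (sing '' Sa) Q' Qf' q0' Δ' ∧ Deterministic Δ' ∧
    NLang (sing '' Sa) q0' Δ' Qf' = treeRel sing '' L

/-- Runs of a classical finite (string) automaton with transition map `δ`. -/
inductive FASteps (δ : U → U → Set U) : U → List U → U → Prop where
  | nil (q : U) : FASteps δ q [] q
  | cons {q a p s q'} : p ∈ δ q a → FASteps δ p s q' → FASteps δ q (a :: s) q'

/-- The language of a classical finite automaton `(Sa, Q, Q_f, q₀, δ)`. -/
def FALang (Sa : Set U) (δ : U → U → Set U) (q0 : U) (Qf : Set U) : Set (List U) :=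
  {s | (∀ a ∈ s, a ∈ Sa) ∧ ∃ qf ∈ Qf, FASteps δ q0 s qf}

/-- `n`-fold composition of a relation: `relPow r n a b` iff `a ⇒ⁿ b`. -/
def relPow {α : Type} (r : α → α → Prop) : ℕ → α → α → Prop
  | 0, a, b => a = b
  | n + 1, a, c => ∃ b, r a b ∧ relPow r n b c


/-! Ranked terms and classical tree automata. -/

/-- Unranked terms (rose trees) over a symbol type `F`. -/
inductive PreTerm (F : Type) : Type where
  | node : F → List (PreTerm F) → PreTerm F

/-- A term is well-ranked w.r.t. an arity function. -/
inductive WellRanked {F : Type} (ar : F → ℕ) : PreTerm F → Prop where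
  | node {f : F} {ts : List (PreTerm F)} : ts.length = ar f →
      (∀ t ∈ ts, WellRanked ar t) → WellRanked ar (PreTerm.node f ts)

/-- The term-to-string-tree map `τ`:
`τ(f(t₁,…,t_p)) = ⟨f τ(t₁) ⋯ τ(t_p)⟩` (and `τ(a) = ⟨a⟩` for constants). -/
def tau {F : Type} : PreTerm F → List (TSym F)
  | PreTerm.node f ts =>
      TSym.op :: TSym.ltr f :: ((ts.attach.map (fun x => tau x.1)).flatten ++ [TSym.cl])
  decreasing_by
    simp only [PreTerm.node.sizeOf_spec]
    have h := List.sizeOf_lt_of_mem x.2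
    omega

/-- A term over the ranked alphabet given by symbols `Sa` and arities `ar`. -/
inductive GoodTerm (Sa : Set U) (ar : U → ℕ) : PreTerm U → Prop where
  | node {f : U} {ts : List (PreTerm U)} : f ∈ Sa → ts.length = ar f →
      (∀ t ∈ ts, GoodTerm Sa ar t) → GoodTerm Sa ar (PreTerm.node f ts)

/-- Bottom-up runs of a classical tree automaton with rules
`f(q₁,…,qₙ) → q`: `CRun Δh t q` means the run assigns state `q` to `t`. -/
inductive CRun (Δh : Set (U × List U × U)) : PreTerm U → U → Prop where
  | node {f : U} {ts : List (PreTerm U)} {qs : List U} {q : U} :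
      (f, qs, q) ∈ Δh → qs.length = ts.length →
      (∀ p ∈ ts.zip qs, CRun Δh p.1 p.2) →
      CRun Δh (PreTerm.node f ts) q

/-- The term language of a classical tree automaton. -/
def TermLang (Sa : Set U) (ar : U → ℕ) (Δh : Set (U × List U × U)) (Qhf : Set U) :
    Set (PreTerm U) :=
  {t | GoodTerm Sa ar t ∧ ∃ q ∈ Qhf, CRun Δh t q}

/-! Vertical tree representation of strings. -/

def omegaRev : List U → List (TSym U)
  | [] => [TSym.op, TSym.cl]
  | a :: s => TSym.op :: (omegaRev s ++ [TSym.ltr a, TSym.cl])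

/-- The vertical tree representation `ω(a₁⋯aₙ) = ⟨⟨⋯⟨⟩a₁⟩a₂⟩⋯aₙ⟩`,
defined by `ω(ε) = ⟨⟩` and `ω(sa) = ⟨ω(s)⟩·⟨a⟩`. -/
def omega (s : List U) : List (TSym U) := omegaRev s.reverse

/-! Regular string tree grammars. -/

/-- A regular expression is over the symbol set `S`. -/
def REOver (S : Set U) : RegularExpression U → Prop
  | RegularExpression.zero => True
  | RegularExpression.epsilon => True
  | RegularExpression.char a => a ∈ S
  | RegularExpression.plus e₁ e₂ => REOver S e₁ ∧ REOver S e₂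
  | RegularExpression.comp e₁ e₂ => REOver S e₁ ∧ REOver S e₂
  | RegularExpression.star e => REOver S e

/-- One derivation step of a regular string tree grammar with rule set `R`:
`lXr →_G l⟨x⟩r` whenever `X → ⟨e⟩ ∈ R` and `x ∈ ⟦e⟧`. -/
def GDeriv (R : Set (U × RegularExpression U)) (u v : List (TSym U)) : Prop :=
  ∃ (l r : List (TSym U)) (X : U) (e : RegularExpression U) (x : List U),
    (X, e) ∈ R ∧ x ∈ e.matches' ∧
    u = l ++ [TSym.ltr X] ++ r ∧ v = l ++ (TSym.op :: (strOf x ++ [TSym.cl])) ++ r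

/-- The language generated by a regular string tree grammar with axiom `S`:
all trees of `T(Σ)` derivable from `S`. -/
def GramLang (Sa : Set U) (S : U) (R : Set (U × RegularExpression U)) :
    Set (List (TSym U)) :=
  {t | t ∈ TreeSet Sa ∧ Relation.ReflTransGen (GDeriv R) [TSym.ltr S] t}

/-- Well-formedness of a regular string tree grammar `(Σ, N, S, R)`. -/
def GramWF (Sa N : Set U) (S : U) (R : Set (U × RegularExpression U)) : Prop :=
  N.Finite ∧ Disjoint N Sa ∧ S ∈ N ∧ ∀ p ∈ R, p.1 ∈ N ∧ REOver (Sa ∪ N) p.2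

/-! The map `Γ` and the instance relation `⊴` of the subset-construction
equivalence proof. -/

/-- `Γ` applies (the extension of) `γ` to every set-symbol that is not
immediately followed by a slash:
`Γ(ε)=ε`, `Γ(⟨s)=⟨Γ(s)`, `Γ(⟩s)=⟩Γ(s)`, `Γ(a/s)=a/Γ(s)`, `Γ(as)=γ(a)Γ(s)`. -/
def GammaMap (g : Set U → Set U) : List (TSym (Set U)) → List (TSym (Set U))
  | [] => []
  | TSym.op :: s => TSym.op :: GammaMap g s
  | TSym.cl :: s => TSym.cl :: GammaMap g s
  | TSym.slash :: s => TSym.slash :: GammaMap g s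
  | TSym.ltr a :: TSym.slash :: s => TSym.ltr a :: TSym.slash :: GammaMap g s
  | TSym.ltr a :: s => TSym.ltr (g a) :: GammaMap g s

/-- Symbol-wise instance relation: brackets and slashes match, and a plain
symbol is an element of the corresponding set-symbol. -/
inductive SymInst : TSym U → TSym (Set U) → Prop where
  | op : SymInst TSym.op TSym.op
  | cl : SymInst TSym.cl TSym.cl
  | slash : SymInst TSym.slash TSym.slash
  | ltr {a : U} {A : Set U} : a ∈ A → SymInst (TSym.ltr a) (TSym.ltr A)

/-- `v ⊴ v'`: `v` is an instance of `v'`. -/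
def Inst (v : List (TSym U)) (v' : List (TSym (Set U))) : Prop :=
  List.Forall₂ SymInst v v'

end StringTree

namespace StringTree

/-! ### Auxiliary development for the subset construction -/

section Aux

variable {U V : Type}

/-- Skeleton of a symbol: records only the constructor. -/
def sk : TSym V → ℕ
  | TSym.op => 0
  | TSym.cl => 1
  | TSym.slash => 2
  | TSym.ltr _ => 3

theorem sk_gamma (g : Set U → Set U) :
    ∀ s : List (TSym (Set U)), (GammaMap g s).map sk = s.map sk
  | [] => rfl
  | TSym.op :: s => by simp [GammaMap, sk_gamma g s]
  | TSym.cl :: s => by simp [GammaMap, sk_gamma g s]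
  | TSym.slash :: s => by simp [GammaMap, sk_gamma g s]
  | TSym.ltr a :: TSym.slash :: s => by simp [GammaMap, sk, sk_gamma g s]
  | [TSym.ltr a] => by simp [GammaMap, sk]
  | TSym.ltr a :: TSym.op :: s => by simp [GammaMap, sk, sk_gamma g s]
  | TSym.ltr a :: TSym.cl :: s => by simp [GammaMap, sk, sk_gamma g s]
  | TSym.ltr a :: TSym.ltr b :: s => by
      have := sk_gamma g (TSym.ltr b :: s)
      simp only [GammaMap, List.map_cons, sk] at this ⊢
      rw [this]

theorem Inst.sk_eq {v : List (TSym U)} {w : List (TSym (Set U))} (h : Inst v w) :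
    v.map sk = w.map sk := by
  induction h with
  | nil => rfl
  | cons h _ ih => cases h <;> simp [sk, ih]

theorem gamma_ltr_cons (g : Set U → Set U) (a : Set U) {s : List (TSym (Set U))}
    (h : s.head? ≠ some TSym.slash) :
    GammaMap g (TSym.ltr a :: s) = TSym.ltr (g a) :: GammaMap g s := by
  cases s with
  | nil => simp [GammaMap]
  | cons c t => cases c <;> simp_all [GammaMap]

theorem gamma_append (g : Set U → Set U) :
    ∀ (x : List (TSym (Set U))) {y : List (TSym (Set U))}, y.head? ≠ some TSym.slash →
      GammaMap g (x ++ y) = GammaMap g x ++ GammaMap g y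
  | [], y, _ => by simp [GammaMap]
  | TSym.op :: s, y, h => by simp [GammaMap, gamma_append g s h]
  | TSym.cl :: s, y, h => by simp [GammaMap, gamma_append g s h]
  | TSym.slash :: s, y, h => by simp [GammaMap, gamma_append g s h]
  | TSym.ltr a :: TSym.slash :: s, y, h => by simp [GammaMap, gamma_append g s h]
  | [TSym.ltr a], y, h => by
      rw [List.singleton_append, gamma_ltr_cons g a h]; simp [GammaMap]
  | TSym.ltr a :: TSym.op :: s, y, h => by
      simp [GammaMap, gamma_append g s h]
  | TSym.ltr a :: TSym.cl :: s, y, h => by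
      simp [GammaMap, gamma_append g s h]
  | TSym.ltr a :: TSym.ltr b :: s, y, h => by
      have := gamma_append g (TSym.ltr b :: s) h
      simp only [GammaMap, List.cons_append, List.append_eq] at this ⊢
      rw [this]

theorem gamma_strOf (g : Set U → Set U) :
    ∀ (As : List (Set U)) {y : List (TSym (Set U))}, y.head? ≠ some TSym.slash →
      GammaMap g (strOf As ++ y) = strOf (As.map g) ++ GammaMap g y
  | [], y, h => by simp [strOf]
  | A :: As, y, h => by
      have h2 : (strOf As ++ y).head? ≠ some TSym.slash := by
        cases As with
        | nil => simpa [strOf] using h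
        | cons B Bs => simp [strOf]
      have : strOf (A :: As) ++ y = TSym.ltr A :: (strOf As ++ y) := by simp [strOf]
      rw [this, gamma_ltr_cons g A h2, gamma_strOf g As h]
      simp [strOf]

theorem inst_append {a b : List (TSym U)} {A B : List (TSym (Set U))}
    (h1 : Inst a A) (h2 : Inst b B) : Inst (a ++ b) (A ++ B) := by
  induction h1 with
  | nil => exact h2
  | cons hx _ ih => exact List.Forall₂.cons hx ih

theorem inst_append_split : ∀ {a : List (TSym U)} {A : List (TSym (Set U))}
    {b : List (TSym U)} {B : List (TSym (Set U))},
    Inst (a ++ b) (A ++ B) → a.length = A.length → Inst a A ∧ Inst b B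
  | [], [], b, B, h, _ => ⟨List.Forall₂.nil, h⟩
  | [], X :: A, b, B, h, hl => by simp at hl
  | x :: a, [], b, B, h, hl => by simp at hl
  | x :: a, X :: A, b, B, h, hl => by
      cases h with
      | cons hx h' =>
        have := inst_append_split h' (by simpa using hl)
        exact ⟨List.Forall₂.cons hx this.1, this.2⟩

theorem inst_append_inv : ∀ {A : List (TSym (Set U))} {v : List (TSym U)}
    {B : List (TSym (Set U))}, Inst v (A ++ B) →
    ∃ v₁ v₂, v = v₁ ++ v₂ ∧ Inst v₁ A ∧ Inst v₂ B
  | [], v, B, h => ⟨[], v, rfl, List.Forall₂.nil, h⟩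
  | X :: A, v, B, h => by
      cases h with
      | cons hx h' =>
        obtain ⟨v₁, v₂, rfl, h1, h2⟩ := inst_append_inv h'
        exact ⟨_ :: v₁, v₂, rfl, List.Forall₂.cons hx h1, h2⟩

theorem inst_strOf {s : List U} {Bs : List (Set U)}
    (h : List.Forall₂ (· ∈ ·) s Bs) : Inst (strOf s) (strOf Bs) := by
  induction h with
  | nil => exact List.Forall₂.nil
  | cons hx _ ih => exact List.Forall₂.cons (SymInst.ltr hx) ih

theorem inst_strOf_inv : ∀ {Bs : List (Set U)} {m : List (TSym U)},
    Inst m (strOf Bs) → ∃ s, m = strOf s ∧ List.Forall₂ (· ∈ ·) s Bs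
  | [], m, h => by
      cases h; exact ⟨[], rfl, List.Forall₂.nil⟩
  | B :: Bs, m, h => by
      cases h with
      | cons hx h' =>
        obtain ⟨s, rfl, hs⟩ := inst_strOf_inv h'
        cases hx with
        | ltr ha => exact ⟨_ :: s, rfl, List.Forall₂.cons ha hs⟩

theorem map_sk_append_inv : ∀ {a : List ℕ} {w : List (TSym (Set U))} {b : List ℕ},
    w.map sk = a ++ b → ∃ w₁ w₂, w = w₁ ++ w₂ ∧ w₁.map sk = a ∧ w₂.map sk = b
  | [], w, b, h => ⟨[], w, rfl, rfl, h⟩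
  | n :: a, w, b, h => by
      cases w with
      | nil => simp at h
      | cons x w' =>
        simp only [List.map_cons, List.cons_append, List.cons.injEq] at h
        obtain ⟨w₁, w₂, rfl, h1, h2⟩ := map_sk_append_inv h.2
        exact ⟨x :: w₁, w₂, rfl, by simp [h.1, h1], h2⟩

theorem map_sk_cons_inv {w : List (TSym (Set U))} {n : ℕ} {b : List ℕ}
    (h : w.map sk = n :: b) :
    ∃ x w', w = x :: w' ∧ sk x = n ∧ w'.map sk = b := by
  cases w with
  | nil => simp at h
  | cons x w' => simp only [List.map_cons, List.cons.injEq] at h; exact ⟨x, w', rfl, h.1, h.2⟩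

theorem sk_eq_op {x : TSym (Set U)} (h : sk x = 0) : x = TSym.op := by
  cases x <;> simp [sk] at h <;> rfl

theorem sk_eq_cl {x : TSym (Set U)} (h : sk x = 1) : x = TSym.cl := by
  cases x <;> simp [sk] at h <;> rfl

theorem sk_eq_slash {x : TSym (Set U)} (h : sk x = 2) : x = TSym.slash := by
  cases x <;> simp [sk] at h <;> rfl

theorem sk_eq_ltr {x : TSym (Set U)} (h : sk x = 3) : ∃ A, x = TSym.ltr A := by
  cases x <;> simp [sk] at h
  exact ⟨_, rfl⟩

theorem strOf_map_sk (s : List U) : (strOf s).map sk = List.replicate s.length 3 := by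
  induction s with
  | nil => rfl
  | cons a s ih => simp [strOf, sk, List.replicate] at ih ⊢; exact ih

theorem map_sk_replicate_inv : ∀ {n : ℕ} {w : List (TSym (Set U))},
    w.map sk = List.replicate n 3 → ∃ As : List (Set U), w = strOf As ∧ As.length = n
  | 0, w, h => by
      cases w with
      | nil => exact ⟨[], rfl, rfl⟩
      | cons x w' => simp [List.replicate] at h
  | n + 1, w, h => by
      cases w with
      | nil => simp [List.replicate] at h
      | cons x w' =>
        simp only [List.map_cons, List.replicate, List.cons.injEq] at h
        obtain ⟨A, rfl⟩ := sk_eq_ltr h.1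
        obtain ⟨As, rfl, hlen⟩ := map_sk_replicate_inv h.2
        exact ⟨A :: As, rfl, by simp [hlen]⟩

/-- Slash-wellformedness plus state bounds: every slash occurs in a chunk
`⟨A/` with `A ⊆ Q` and `A ∩ Sa = ∅`, and every plain set-symbol is `⊆ Q`. -/
inductive SOK (Q Sa : Set U) : List (TSym (Set U)) → Prop where
  | nil : SOK Q Sa []
  | op {s} : SOK Q Sa s → SOK Q Sa (TSym.op :: s)
  | cl {s} : SOK Q Sa s → SOK Q Sa (TSym.cl :: s)
  | ltr {A s} : A ⊆ Q → SOK Q Sa s → SOK Q Sa (TSym.ltr A :: s)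
  | st {A s} : A ⊆ Q → (∀ a ∈ A, a ∉ Sa) → SOK Q Sa s →
      SOK Q Sa (TSym.op :: TSym.ltr A :: TSym.slash :: s)

variable {Q Sa : Set U}

theorem SOK.head_ne_slash {s : List (TSym (Set U))} (h : SOK Q Sa s) :
    s.head? ≠ some TSym.slash := by
  cases h <;> simp

theorem SOK.append : ∀ {x y : List (TSym (Set U))}, SOK Q Sa x → SOK Q Sa y →
    SOK Q Sa (x ++ y) := by
  intro x y hx hy
  induction hx with
  | nil => exact hy
  | op _ ih => exact SOK.op ih
  | cl _ ih => exact SOK.cl ih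
  | ltr hA _ ih => exact SOK.ltr hA ih
  | st hA hS _ ih => exact SOK.st hA hS ih

theorem sok_split_op : ∀ (x : List (TSym (Set U))) {y : List (TSym (Set U))},
    SOK Q Sa (x ++ TSym.op :: y) → SOK Q Sa x ∧ SOK Q Sa (TSym.op :: y)
  | [], y, h => ⟨SOK.nil, h⟩
  | TSym.op :: x', y, h => by
      have h : SOK Q Sa (TSym.op :: (x' ++ TSym.op :: y)) := h
      generalize hz : x' ++ TSym.op :: y = z at h
      cases h with
      | op h' =>
        subst hz
        have := sok_split_op x' h'
        exact ⟨SOK.op this.1, this.2⟩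
      | st hA hS h' =>
        rename_i A s
        match x', hz with
        | [], hz => simp at hz
        | [z0], hz => simp at hz
        | z1 :: z2 :: x'', hz =>
          simp only [List.cons_append, List.cons.injEq] at hz
          obtain ⟨h1, h2, h3⟩ := hz
          subst h1; subst h2
          have := sok_split_op x'' (h3.symm ▸ h')
          exact ⟨SOK.st hA hS this.1, this.2⟩
  | TSym.cl :: x', y, h => by
      cases h with
      | cl h' =>
        have := sok_split_op x' h'
        exact ⟨SOK.cl this.1, this.2⟩
  | TSym.slash :: x', y, h => by cases h
  | TSym.ltr A :: x', y, h => by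
      cases h with
      | ltr hA h' =>
        have := sok_split_op x' h'
        exact ⟨SOK.ltr hA this.1, this.2⟩

theorem sok_strOf_inv : ∀ (As : List (Set U)) {y : List (TSym (Set U))},
    SOK Q Sa (strOf As ++ y) → (∀ A ∈ As, A ⊆ Q) ∧ SOK Q Sa y
  | [], y, h => ⟨by simp, h⟩
  | A :: As, y, h => by
      have h' : SOK Q Sa (TSym.ltr A :: (strOf As ++ y)) := by
        simpa [strOf] using h
      cases h' with
      | ltr hA h2 =>
        have := sok_strOf_inv As h2
        exact ⟨by simpa using ⟨hA, this.1⟩, this.2⟩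

theorem sok_strOf_app {As : List (Set U)} {y : List (TSym (Set U))}
    (hAs : ∀ A ∈ As, A ⊆ Q) (hy : SOK Q Sa y) : SOK Q Sa (strOf As ++ y) := by
  induction As with
  | nil => simpa [strOf]
  | cons A As ih =>
      have : strOf (A :: As) ++ y = TSym.ltr A :: (strOf As ++ y) := by simp [strOf]
      rw [this]
      exact SOK.ltr (hAs A (by simp)) (ih (fun B hB => hAs B (by simp [hB])))

theorem sok_op_strOf_inv {As : List (Set U)} {r : List (TSym (Set U))}
    (h : SOK Q Sa (TSym.op :: (strOf As ++ TSym.cl :: r))) :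
    SOK Q Sa (strOf As ++ TSym.cl :: r) := by
  generalize hz : strOf As ++ TSym.cl :: r = z at h
  cases h with
  | op h' => exact hz ▸ h'
  | st hA hS h' =>
    rename_i A s
    match As, hz with
    | [], hz => simp [strOf] at hz
    | [B], hz => simp [strOf] at hz
    | B1 :: B2 :: As', hz => simp [strOf] at hz

theorem sok_st_inv {A : Set U} {s : List (TSym (Set U))}
    (h : SOK Q Sa (TSym.op :: TSym.ltr A :: TSym.slash :: s)) :
    A ⊆ Q ∧ (∀ a ∈ A, a ∉ Sa) ∧ SOK Q Sa s := by
  cases h with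
  | op h' =>
    cases h' with
    | ltr _ h2 => cases h2
  | st hA hS h' => exact ⟨hA, hS, h'⟩

theorem sok_cl_inv {s : List (TSym (Set U))} (h : SOK Q Sa (TSym.cl :: s)) :
    SOK Q Sa s := by
  cases h with
  | cl h' => exact h'

theorem strOf_head_ne_slash {As : List (Set U)} {z : List (TSym (Set U))}
    (h : z.head? ≠ some TSym.slash) :
    (strOf As ++ z).head? ≠ some TSym.slash := by
  cases As with
  | nil => simpa [strOf] using h
  | cons A As => simp [strOf]

theorem gammaShape1 (g : Set U → Set U) (l' : List (TSym (Set U))) (As : List (Set U))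
    (r' : List (TSym (Set U))) :
    GammaMap g (l' ++ TSym.op :: (strOf As ++ TSym.cl :: r')) =
      GammaMap g l' ++ TSym.op :: (strOf (As.map g) ++ TSym.cl :: GammaMap g r') := by
  rw [gamma_append g l' (by simp)]
  congr 1
  show GammaMap g (TSym.op :: (strOf As ++ TSym.cl :: r')) = _
  rw [show GammaMap g (TSym.op :: (strOf As ++ TSym.cl :: r')) =
    TSym.op :: GammaMap g (strOf As ++ TSym.cl :: r') from rfl]
  rw [gamma_strOf g As (by simp)]
  rfl

theorem gammaShape2 (g : Set U → Set U) (l' : List (TSym (Set U))) (A B : Set U)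
    (As : List (Set U)) (r' : List (TSym (Set U))) :
    GammaMap g (l' ++ TSym.op :: TSym.ltr A :: TSym.slash :: TSym.ltr B ::
        (strOf As ++ TSym.cl :: r')) =
      GammaMap g l' ++ TSym.op :: TSym.ltr A :: TSym.slash :: TSym.ltr (g B) ::
        (strOf (As.map g) ++ TSym.cl :: GammaMap g r') := by
  rw [gamma_append g l' (by simp)]
  congr 1
  show TSym.op :: GammaMap g (TSym.ltr A :: TSym.slash :: (TSym.ltr B ::
      (strOf As ++ TSym.cl :: r'))) = _
  rw [show GammaMap g (TSym.ltr A :: TSym.slash :: (TSym.ltr B :: (strOf As ++ TSym.cl :: r')))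
    = TSym.ltr A :: TSym.slash :: GammaMap g (TSym.ltr B :: (strOf As ++ TSym.cl :: r'))
    from rfl]
  rw [gamma_ltr_cons g B (strOf_head_ne_slash (by simp))]
  rw [gamma_strOf g As (by simp)]
  rfl

theorem gammaShape2' (g : Set U → Set U) (l' : List (TSym (Set U))) (C : Set U)
    (As : List (Set U)) (r' : List (TSym (Set U))) :
    GammaMap g (l' ++ TSym.op :: TSym.ltr C :: TSym.slash :: (strOf As ++ TSym.cl :: r')) =
      GammaMap g l' ++ TSym.op :: TSym.ltr C :: TSym.slash ::
        (strOf (As.map g) ++ TSym.cl :: GammaMap g r') := by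
  rw [gamma_append g l' (by simp)]
  congr 1
  show TSym.op :: GammaMap g (TSym.ltr C :: TSym.slash :: (strOf As ++ TSym.cl :: r')) = _
  rw [show GammaMap g (TSym.ltr C :: TSym.slash :: (strOf As ++ TSym.cl :: r'))
    = TSym.ltr C :: TSym.slash :: GammaMap g (strOf As ++ TSym.cl :: r') from rfl]
  rw [gamma_strOf g As (by simp)]
  rfl

theorem gammaShape3 (g : Set U → Set U) (l' : List (TSym (Set U))) (A : Set U)
    (r' : List (TSym (Set U))) :
    GammaMap g (l' ++ TSym.op :: TSym.ltr A :: TSym.slash :: TSym.cl :: r') =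
      GammaMap g l' ++ TSym.op :: TSym.ltr A :: TSym.slash :: TSym.cl :: GammaMap g r' := by
  rw [gamma_append g l' (by simp)]
  rfl

theorem gammaShape3' (g : Set U → Set U) (l' : List (TSym (Set U))) (A : Set U)
    {r' : List (TSym (Set U))} (h : r'.head? ≠ some TSym.slash) :
    GammaMap g (l' ++ TSym.ltr A :: r') =
      GammaMap g l' ++ TSym.ltr (g A) :: GammaMap g r' := by
  rw [gamma_append g l' (by simp), gamma_ltr_cons g A h]

theorem shape1 {u' : List (TSym (Set U))} {l r : List (TSym U)} {s : List U}
    (h : u'.map sk = (l ++ TSym.op :: (strOf s ++ TSym.cl :: r)).map sk) :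
    ∃ l' As r', u' = l' ++ TSym.op :: (strOf As ++ TSym.cl :: r') ∧
      l'.map sk = l.map sk ∧ As.length = s.length ∧ r'.map sk = r.map sk := by
  rw [List.map_append, List.map_cons, List.map_append, List.map_cons, strOf_map_sk] at h
  obtain ⟨l', w₂, rfl, hl, h2⟩ := map_sk_append_inv h
  obtain ⟨x, w₃, rfl, hx, h3⟩ := map_sk_cons_inv h2
  obtain ⟨m, w₄, rfl, hm, h4⟩ := map_sk_append_inv h3
  obtain ⟨As, rfl, hAs⟩ := map_sk_replicate_inv hm
  obtain ⟨y, r', rfl, hy, hr⟩ := map_sk_cons_inv h4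
  rw [sk_eq_op hx, sk_eq_cl hy]
  exact ⟨l', As, r', rfl, hl, hAs, hr⟩

theorem shape2 {u' : List (TSym (Set U))} {l r : List (TSym U)} {s : List U} {a b : U}
    (h : u'.map sk = (l ++ TSym.op :: TSym.ltr a :: TSym.slash :: TSym.ltr b ::
      (strOf s ++ TSym.cl :: r)).map sk) :
    ∃ l' A B As r', u' = l' ++ TSym.op :: TSym.ltr A :: TSym.slash :: TSym.ltr B ::
        (strOf As ++ TSym.cl :: r') ∧
      l'.map sk = l.map sk ∧ As.length = s.length ∧ r'.map sk = r.map sk := by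
  simp only [List.map_append, List.map_cons, strOf_map_sk] at h
  obtain ⟨l', w₂, rfl, hl, h2⟩ := map_sk_append_inv h
  obtain ⟨x1, w₃, rfl, hx1, h3⟩ := map_sk_cons_inv h2
  obtain ⟨x2, w₄, rfl, hx2, h4⟩ := map_sk_cons_inv h3
  obtain ⟨x3, w₅, rfl, hx3, h5⟩ := map_sk_cons_inv h4
  obtain ⟨x4, w₆, rfl, hx4, h6⟩ := map_sk_cons_inv h5
  obtain ⟨m, w₇, rfl, hm, h7⟩ := map_sk_append_inv h6
  obtain ⟨As, rfl, hAs⟩ := map_sk_replicate_inv hm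
  obtain ⟨y, r', rfl, hy, hr⟩ := map_sk_cons_inv h7
  obtain ⟨A, rfl⟩ := sk_eq_ltr hx2
  obtain ⟨B, rfl⟩ := sk_eq_ltr hx4
  rw [sk_eq_op hx1, sk_eq_slash hx3, sk_eq_cl hy]
  exact ⟨l', A, B, As, r', rfl, hl, hAs, hr⟩

theorem shape3 {u' : List (TSym (Set U))} {l r : List (TSym U)} {a : U}
    (h : u'.map sk = (l ++ TSym.op :: TSym.ltr a :: TSym.slash :: TSym.cl :: r).map sk) :
    ∃ l' A r', u' = l' ++ TSym.op :: TSym.ltr A :: TSym.slash :: TSym.cl :: r' ∧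
      l'.map sk = l.map sk ∧ r'.map sk = r.map sk := by
  simp only [List.map_append, List.map_cons] at h
  obtain ⟨l', w₂, rfl, hl, h2⟩ := map_sk_append_inv h
  obtain ⟨x1, w₃, rfl, hx1, h3⟩ := map_sk_cons_inv h2
  obtain ⟨x2, w₄, rfl, hx2, h4⟩ := map_sk_cons_inv h3
  obtain ⟨x3, w₅, rfl, hx3, h5⟩ := map_sk_cons_inv h4
  obtain ⟨x4, r', rfl, hx4, hr⟩ := map_sk_cons_inv h5
  obtain ⟨A, rfl⟩ := sk_eq_ltr hx2
  rw [sk_eq_op hx1, sk_eq_slash hx3, sk_eq_cl hx4]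
  exact ⟨l', A, r', rfl, hl, hr⟩

theorem subsetDelta_subset {Sa Q : Set U} {Δ : Set (U × U × U)} {γ : U → Set U}
    (hΔQ : ∀ p ∈ Δ, p.2.2 ∈ Q) (A B : Set U) : subsetDelta Sa γ Δ A B ⊆ Q := by
  rintro c ⟨a, _, b, _, hc⟩
  exact hΔQ _ hc

theorem subsetDelta_pure {Sa : Set U} {Δ : Set (U × U × U)} {γ : U → Set U}
    (hΔSa : ∀ p ∈ Δ, p.2.2 ∉ Sa) (A B : Set U) :
    ∀ c ∈ subsetDelta Sa γ Δ A B, c ∉ Sa := by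
  rintro c ⟨a, _, b, _, hc⟩
  exact hΔSa _ hc

theorem sok_step {Sa Q Q0 : Set U} {Δ : Set (U × U × U)} {γ : U → Set U}
    (hQ0Q : Q0 ⊆ Q) (hQ0Sa : ∀ a ∈ Q0, a ∉ Sa)
    (hΔQ : ∀ p ∈ Δ, p.2.2 ∈ Q) (hΔSa : ∀ p ∈ Δ, p.2.2 ∉ Sa)
    {u' w' : List (TSym (Set U))}
    (hm : GMove {Q0} (subsetRules Sa γ Δ Q) (fun a => {a}) u' w')
    (hs : SOK Q Sa u') : SOK Q Sa w' := by
  cases hm with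
  | init ha =>
    rename_i l r s a
    rw [Set.mem_singleton_iff] at ha; subst ha
    simp only [List.append_assoc, List.cons_append, List.singleton_append,
      List.nil_append] at hs ⊢
    obtain ⟨hl, hmid⟩ := sok_split_op l hs
    exact hl.append (SOK.st hQ0Q hQ0Sa (sok_op_strOf_inv hmid))
  | horiz hrule =>
    rename_i l r s a b c
    obtain ⟨hA, hB, hC⟩ := hrule
    simp only at hA hB hC
    subst hC
    simp only [List.append_assoc, List.cons_append, List.singleton_append,
      List.nil_append] at hs ⊢
    obtain ⟨hl, hmid⟩ := sok_split_op l hs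
    obtain ⟨_, _, h3⟩ := sok_st_inv hmid
    cases h3 with
    | ltr hBQ h4 =>
      exact hl.append (SOK.st (subsetDelta_subset hΔQ a b) (subsetDelta_pure hΔSa a b) h4)
  | vert hb =>
    rename_i l r a b
    simp only [Set.mem_singleton_iff] at hb; subst hb
    simp only [List.append_assoc, List.cons_append, List.singleton_append,
      List.nil_append] at hs ⊢
    obtain ⟨hl, hmid⟩ := sok_split_op l hs
    obtain ⟨hA, _, h3⟩ := sok_st_inv hmid
    exact hl.append (SOK.ltr hA (sok_cl_inv h3))

theorem gamma_length (g : Set U → Set U) (w : List (TSym (Set U))) :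
    (GammaMap g w).length = w.length := by
  have := congrArg List.length (sk_gamma g w)
  simpa using this

theorem fwd_step {Sa Q Q0 : Set U} {Δ : Set (U × U × U)} {γ : U → Set U}
    {u w : List (TSym U)} {u' : List (TSym (Set U))}
    (hu : Inst u (GammaMap (gammaExt Sa γ) u')) (hs : SOK Q Sa u')
    (hm : GMove Q0 Δ γ u w) :
    ∃ w', GMove {Q0} (subsetRules Sa γ Δ Q) (fun a => {a}) u' w' ∧
      Inst w (GammaMap (gammaExt Sa γ) w') := by
  have hsk : u'.map sk = u.map sk := by
    rw [← sk_gamma (gammaExt Sa γ) u', ← hu.sk_eq]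
  cases hm with
  | init ha =>
    rename_i l r s a
    simp only [List.append_assoc, List.cons_append, List.singleton_append,
      List.nil_append] at hsk hu ⊢
    obtain ⟨l', As, r', rfl, hl, hlen, hr⟩ := shape1 hsk
    rw [gammaShape1] at hu
    have hll : l.length = (GammaMap (gammaExt Sa γ) l').length := by
      rw [gamma_length]
      simpa using (congrArg List.length hl).symm
    obtain ⟨hul, humid⟩ := inst_append_split hu hll
    cases humid with
    | cons _ h2 =>
      have hsl : (strOf s).length = (strOf (As.map (gammaExt Sa γ))).length := by
        simp [strOf, hlen]
      obtain ⟨hus, h3⟩ := inst_append_split h2 hsl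
      cases h3 with
      | cons _ h4 =>
        refine ⟨l' ++ TSym.op :: TSym.ltr Q0 :: TSym.slash :: (strOf As ++ TSym.cl :: r'),
          ?_, ?_⟩
        · have mv := GMove.init (l := l') (r := r') (s := As)
            (Q0 := ({Q0} : Set (Set U))) (Δ := subsetRules Sa γ Δ Q) (γ := fun a => {a})
            (a := Q0) (Set.mem_singleton_iff.mpr rfl)
          simpa only [List.append_assoc, List.cons_append, List.singleton_append,
            List.nil_append] using mv
        · rw [gammaShape2']
          exact inst_append hul (List.Forall₂.cons SymInst.op (List.Forall₂.cons
            (SymInst.ltr ha) (List.Forall₂.cons SymInst.slash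
            (inst_append hus (List.Forall₂.cons SymInst.cl h4)))))
  | horiz hrule =>
    rename_i l r s a b c
    simp only [List.append_assoc, List.cons_append, List.singleton_append,
      List.nil_append] at hsk hu hs ⊢
    obtain ⟨l', A, B, As, r', rfl, hl, hlen, hr⟩ := shape2 hsk
    rw [gammaShape2] at hu
    have hll : l.length = (GammaMap (gammaExt Sa γ) l').length := by
      rw [gamma_length]
      simpa using (congrArg List.length hl).symm
    obtain ⟨hul, humid⟩ := inst_append_split hu hll
    cases humid with
    | cons _ h2 =>
    cases h2 with
    | cons hxa h3 =>
    cases h3 with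
    | cons _ h4 =>
    cases h4 with
    | cons hxb h5 =>
    cases hxa with
    | ltr ha =>
    cases hxb with
    | ltr hb =>
    have hsl : (strOf s).length = (strOf (As.map (gammaExt Sa γ))).length := by
      simp [strOf, hlen]
    obtain ⟨hus, h6⟩ := inst_append_split h5 hsl
    cases h6 with
    | cons _ h7 =>
    obtain ⟨hsl', hmid⟩ := sok_split_op l' hs
    obtain ⟨hAQ, hASa, h8⟩ := sok_st_inv hmid
    cases h8 with
    | ltr hBQ _ =>
    refine ⟨l' ++ TSym.op :: TSym.ltr (subsetDelta Sa γ Δ A B) :: TSym.slash ::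
      (strOf As ++ TSym.cl :: r'), ?_, ?_⟩
    · have mv := GMove.horiz (l := l') (r := r') (s := As)
        (Q0 := ({Q0} : Set (Set U))) (γ := fun a => {a})
        (a := A) (b := B) (c := subsetDelta Sa γ Δ A B)
        (show (A, B, subsetDelta Sa γ Δ A B) ∈ subsetRules Sa γ Δ Q from ⟨hAQ, hBQ, rfl⟩)
      simpa only [List.append_assoc, List.cons_append, List.singleton_append,
        List.nil_append] using mv
    · rw [gammaShape2']
      exact inst_append hul (List.Forall₂.cons SymInst.op (List.Forall₂.cons
        (SymInst.ltr ⟨a, ha, b, hb, hrule⟩) (List.Forall₂.cons SymInst.slash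
        (inst_append hus (List.Forall₂.cons SymInst.cl h7)))))
  | vert hb =>
    rename_i l r a b
    simp only [List.append_assoc, List.cons_append, List.singleton_append,
      List.nil_append] at hsk hu hs ⊢
    obtain ⟨l', A, r', rfl, hl, hr⟩ := shape3 hsk
    rw [gammaShape3] at hu
    have hll : l.length = (GammaMap (gammaExt Sa γ) l').length := by
      rw [gamma_length]
      simpa using (congrArg List.length hl).symm
    obtain ⟨hul, humid⟩ := inst_append_split hu hll
    cases humid with
    | cons _ h2 =>
    cases h2 with
    | cons hxa h3 =>
    cases h3 with
    | cons _ h4 =>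
    cases h4 with
    | cons _ h5 =>
    cases hxa with
    | ltr ha =>
    obtain ⟨hsl', hmid⟩ := sok_split_op l' hs
    obtain ⟨hAQ, hASa, h8⟩ := sok_st_inv hmid
    have hrs := sok_cl_inv h8
    refine ⟨l' ++ TSym.ltr A :: r', ?_, ?_⟩
    · have mv := GMove.vert (l := l') (r := r') (a := A) (b := A)
        (Q0 := ({Q0} : Set (Set U))) (Δ := subsetRules Sa γ Δ Q)
        (show A ∈ (fun a => ({a} : Set (Set U))) A from Set.mem_singleton_iff.mpr rfl)
      simpa only [List.append_assoc, List.cons_append, List.singleton_append,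
        List.nil_append] using mv
    · rw [gammaShape3' _ _ _ hrs.head_ne_slash]
      exact inst_append hul (List.Forall₂.cons (SymInst.ltr ⟨a, ha, Or.inl hb⟩) h5)

theorem bwd_step {Sa Q Q0 : Set U} {Δ : Set (U × U × U)} {γ : U → Set U}
    {w : List (TSym U)} {u' w' : List (TSym (Set U))}
    (hs : SOK Q Sa u')
    (hm : GMove {Q0} (subsetRules Sa γ Δ Q) (fun a => {a}) u' w')
    (hw : Inst w (GammaMap (gammaExt Sa γ) w')) :
    ∃ u, Inst u (GammaMap (gammaExt Sa γ) u') ∧ GMove Q0 Δ γ u w := by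
  cases hm with
  | init ha =>
    rename_i l' r' As a'
    rw [Set.mem_singleton_iff] at ha; subst ha
    simp only [List.append_assoc, List.cons_append, List.singleton_append,
      List.nil_append] at hw ⊢
    rw [gammaShape2'] at hw
    obtain ⟨w₁, w₂, rfl, hw1, hw2⟩ := inst_append_inv hw
    cases hw2 with
    | cons hop h2 =>
    cases h2 with
    | cons hxa h3 =>
    cases h3 with
    | cons hsl h4 =>
    cases hxa with
    | ltr ha =>
    cases hop
    cases hsl
    obtain ⟨m, w₃, rfl, hm1, hm2⟩ := inst_append_inv h4
    obtain ⟨s, rfl, hss⟩ := inst_strOf_inv hm1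
    cases hm2 with
    | cons hcl h5 =>
    cases hcl
    rename_i rr
    refine ⟨w₁ ++ TSym.op :: (strOf s ++ TSym.cl :: rr), ?_, ?_⟩
    · rw [gammaShape1]
      exact inst_append hw1 (List.Forall₂.cons SymInst.op
        (inst_append (inst_strOf hss) (List.Forall₂.cons SymInst.cl h5)))
    · have mv := GMove.init (l := w₁) (r := rr) (s := s) (Δ := Δ) (γ := γ) ha
      simpa only [List.append_assoc, List.cons_append, List.singleton_append,
        List.nil_append] using mv
  | horiz hrule =>
    rename_i l' r' As A B C
    obtain ⟨hAQ, hBQ, hC⟩ := hrule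
    simp only at hAQ hBQ hC
    subst hC
    simp only [List.append_assoc, List.cons_append, List.singleton_append,
      List.nil_append] at hw ⊢
    rw [gammaShape2'] at hw
    obtain ⟨w₁, w₂, rfl, hw1, hw2⟩ := inst_append_inv hw
    cases hw2 with
    | cons hop h2 =>
    cases h2 with
    | cons hxc h3 =>
    cases h3 with
    | cons hsl h4 =>
    cases hxc with
    | ltr hc =>
    cases hop
    cases hsl
    obtain ⟨m, w₃, rfl, hm1, hm2⟩ := inst_append_inv h4
    obtain ⟨s, rfl, hss⟩ := inst_strOf_inv hm1
    cases hm2 with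
    | cons hcl h5 =>
    cases hcl
    rename_i rr
    obtain ⟨a, ha, b, hb, hab⟩ := hc
    refine ⟨w₁ ++ TSym.op :: TSym.ltr a :: TSym.slash :: TSym.ltr b ::
      (strOf s ++ TSym.cl :: rr), ?_, ?_⟩
    · rw [gammaShape2]
      exact inst_append hw1 (List.Forall₂.cons SymInst.op (List.Forall₂.cons
        (SymInst.ltr ha) (List.Forall₂.cons SymInst.slash (List.Forall₂.cons
        (SymInst.ltr hb) (inst_append (inst_strOf hss)
        (List.Forall₂.cons SymInst.cl h5))))))
    · have mv := GMove.horiz (l := w₁) (r := rr) (s := s) (Q0 := Q0) (γ := γ)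
        (a := a) (b := b) (c := _) hab
      simpa only [List.append_assoc, List.cons_append, List.singleton_append,
        List.nil_append] using mv
  | vert hb =>
    rename_i l' r' A b'
    simp only [Set.mem_singleton_iff] at hb; subst hb
    simp only [List.append_assoc, List.cons_append, List.singleton_append,
      List.nil_append] at hw hs ⊢
    obtain ⟨hsl', hmid⟩ := sok_split_op l' hs
    obtain ⟨hAQ, hASa, h8⟩ := sok_st_inv hmid
    have hrs := sok_cl_inv h8
    rw [gammaShape3' _ _ _ hrs.head_ne_slash] at hw
    obtain ⟨w₁, w₂, rfl, hw1, hw2⟩ := inst_append_inv hw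
    cases hw2 with
    | cons hxb h2 =>
    rename_i x rr
    cases hxb with
    | ltr hbg =>
    rename_i bb
    obtain ⟨a, ha, hcase⟩ := hbg
    have hbγ : bb ∈ γ a := by
      rcases hcase with h | ⟨rfl, haSa⟩
      · exact h
      · exact absurd haSa (hASa _ ha)
    refine ⟨w₁ ++ TSym.op :: TSym.ltr a :: TSym.slash :: TSym.cl :: rr, ?_, ?_⟩
    · rw [gammaShape3]
      exact inst_append hw1 (List.Forall₂.cons SymInst.op (List.Forall₂.cons
        (SymInst.ltr ha) (List.Forall₂.cons SymInst.slash
        (List.Forall₂.cons SymInst.cl h2))))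
    · have mv := GMove.vert (l := w₁) (r := rr) (a := a) (b := bb)
        (Q0 := Q0) (Δ := Δ) hbγ
      simpa only [List.append_assoc, List.cons_append, List.singleton_append,
        List.nil_append] using mv

theorem fwd_n {Sa Q Q0 : Set U} {Δ : Set (U × U × U)} {γ : U → Set U}
    (hQ0Q : Q0 ⊆ Q) (hQ0Sa : ∀ a ∈ Q0, a ∉ Sa)
    (hΔQ : ∀ p ∈ Δ, p.2.2 ∈ Q) (hΔSa : ∀ p ∈ Δ, p.2.2 ∉ Sa) :
    ∀ (n : ℕ) (u : List (TSym U)) (u' : List (TSym (Set U))),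
      Inst u (GammaMap (gammaExt Sa γ) u') → SOK Q Sa u' →
      ∀ v, relPow (GMove Q0 Δ γ) n u v →
      ∃ v', relPow (GMove {Q0} (subsetRules Sa γ Δ Q) (fun a => {a})) n u' v' ∧
        Inst v (GammaMap (gammaExt Sa γ) v')
  | 0, u, u', hu, _, v, hv => by
      cases hv
      exact ⟨u', rfl, hu⟩
  | n + 1, u, u', hu, hs, v, hv => by
      obtain ⟨m, hum, hmv⟩ := hv
      obtain ⟨m', hm', hin⟩ := fwd_step hu hs hum
      obtain ⟨v', hv', hiv⟩ := fwd_n hQ0Q hQ0Sa hΔQ hΔSa n m m' hin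
        (sok_step hQ0Q hQ0Sa hΔQ hΔSa hm' hs) v hmv
      exact ⟨v', ⟨m', hm', hv'⟩, hiv⟩

theorem bwd_n {Sa Q Q0 : Set U} {Δ : Set (U × U × U)} {γ : U → Set U}
    (hQ0Q : Q0 ⊆ Q) (hQ0Sa : ∀ a ∈ Q0, a ∉ Sa)
    (hΔQ : ∀ p ∈ Δ, p.2.2 ∈ Q) (hΔSa : ∀ p ∈ Δ, p.2.2 ∉ Sa) :
    ∀ (n : ℕ) (u' : List (TSym (Set U))), SOK Q Sa u' →
      ∀ v', relPow (GMove {Q0} (subsetRules Sa γ Δ Q) (fun a => {a})) n u' v' →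
      ∀ v, Inst v (GammaMap (gammaExt Sa γ) v') →
      ∃ u, Inst u (GammaMap (gammaExt Sa γ) u') ∧ relPow (GMove Q0 Δ γ) n u v
  | 0, u', _, v', hv', v, hv => by
      cases hv'
      exact ⟨v, hv, rfl⟩
  | n + 1, u', hs, v', hv', v, hv => by
      obtain ⟨w', hw', hrest⟩ := hv'
      obtain ⟨w, hiw, hwv⟩ := bwd_n hQ0Q hQ0Sa hΔQ hΔSa n w'
        (sok_step hQ0Q hQ0Sa hΔQ hΔSa hw' hs) v' hrest v hv
      obtain ⟨u, hiu, huw⟩ := bwd_step hs hw' hiw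
      exact ⟨u, hiu, w, huw, hwv⟩

theorem tree_mem {S : Set (TSym U)} {t : List (TSym U)} (h : IsTree S t) :
    ∀ x ∈ t, x = TSym.op ∨ x = TSym.cl ∨ x ∈ S := by
  induction h with
  | nil => intro x hx; simp at hx; tauto
  | single hmem =>
      intro x hx
      simp at hx
      rcases hx with rfl | rfl | rfl <;> tauto
  | concat h1 h2 ih1 ih2 =>
      intro x hx
      simp at hx
      rcases hx with rfl | hx | hx | rfl
      · tauto
      · exact ih1 x (by simp [hx])
      · exact ih2 x (by simp [hx])
      · tauto
  | encap h ih =>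
      intro x hx
      simp at hx
      rcases hx with rfl | hx | rfl
      · tauto
      · exact ih x hx
      · tauto

theorem sok_of_mem {Q Sa : Set U} : ∀ {w : List (TSym (Set U))},
    (∀ x ∈ w, x = TSym.op ∨ x = TSym.cl ∨ ∃ A, x = TSym.ltr A ∧ A ⊆ Q) → SOK Q Sa w
  | [], _ => SOK.nil
  | x :: w, h => by
      have hw := sok_of_mem (Q := Q) (Sa := Sa) (w := w) (fun y hy => h y (by simp [hy]))
      rcases h x (by simp) with rfl | rfl | ⟨A, rfl, hA⟩
      · exact SOK.op hw
      · exact SOK.cl hw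
      · exact SOK.ltr hA hw

theorem gamma_fix (g : Set U → Set U) : ∀ {w : List (TSym (Set U))},
    (∀ x ∈ w, x ≠ TSym.slash) → (∀ A, TSym.ltr A ∈ w → g A = A) → GammaMap g w = w
  | [], _, _ => rfl
  | TSym.op :: w, h1, h2 => by
      rw [show GammaMap g (TSym.op :: w) = TSym.op :: GammaMap g w from rfl,
        gamma_fix g (fun y hy => h1 y (by simp [hy])) (fun A hA => h2 A (by simp [hA]))]
  | TSym.cl :: w, h1, h2 => by
      rw [show GammaMap g (TSym.cl :: w) = TSym.cl :: GammaMap g w from rfl,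
        gamma_fix g (fun y hy => h1 y (by simp [hy])) (fun A hA => h2 A (by simp [hA]))]
  | TSym.slash :: w, h1, h2 => absurd rfl (h1 TSym.slash (by simp))
  | TSym.ltr A :: w, h1, h2 => by
      have hhd : w.head? ≠ some TSym.slash := by
        cases w with
        | nil => simp
        | cons y w' =>
          have := h1 y (by simp)
          simpa using this
      rw [gamma_ltr_cons g A hhd, h2 A (by simp),
        gamma_fix g (fun y hy => h1 y (by simp [hy])) (fun B hB => h2 B (by simp [hB]))]

theorem gammaExt_sing {Sa : Set U} {γ : U → Set U} (hγ : ∀ a ∈ Sa, γ a = ∅)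
    {a : U} (ha : a ∈ Sa) : gammaExt Sa γ {a} = {a} := by
  ext c
  constructor
  · rintro ⟨b, hb, hc⟩
    rw [Set.mem_singleton_iff] at hb
    subst hb
    rcases hc with hc | ⟨rfl, _⟩
    · rw [hγ _ ha] at hc; exact absurd hc (Set.notMem_empty c)
    · rfl
  · rintro rfl
    exact ⟨c, rfl, Or.inr ⟨rfl, ha⟩⟩

theorem symInst_sing {x : TSym U} : SymInst x (symRel sing x) := by
  cases x with
  | op => exact SymInst.op
  | cl => exact SymInst.cl
  | slash => exact SymInst.slash
  | ltr a => exact SymInst.ltr rfl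

theorem symInst_sing_eq {x y : TSym U} (h : SymInst x (symRel sing y)) : x = y := by
  cases y with
  | op => cases h; rfl
  | cl => cases h; rfl
  | slash => cases h; rfl
  | ltr a =>
      cases h with
      | ltr hm => rw [Set.mem_singleton_iff.mp hm]

theorem inst_treeRel (t : List (TSym U)) : Inst t (treeRel sing t) := by
  rw [Inst, treeRel, List.forall₂_map_right_iff]
  exact List.forall₂_same.mpr (fun x _ => symInst_sing)

theorem inst_treeRel_eq {t v : List (TSym U)} (h : Inst v (treeRel sing t)) : v = t := by
  rw [Inst, treeRel, List.forall₂_map_right_iff] at h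
  have : List.Forall₂ Eq v t := h.imp (fun {a b} hx => symInst_sing_eq hx)
  exact (List.forall₂_eq_eq_eq ▸ this :)

end Aux

/-- subset-construction step correspondence: let `A` be a
GNFSTA with pure states and `A'` the subset-construction DFSTA.  For
`t ∈ T(Σ)` with counterpart `t'` (obtained by renaming `a ↦ {a}`), and for
every `n`: every `v` with `t ⇒ⁿ v` is an instance of `Γ(v')` for some `v'`
with `t' ⇒ⁿ_{A'} v'`, and conversely, for every `v'` with `t' ⇒ⁿ_{A'} v'`,
every instance of `Γ(v')` is reachable: `t ⇒ⁿ v`. -/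
theorem subset_steps_correspondence {U : Type} (Sa Q Qf Q0 : Set U)
    (Δ : Set (U × U × U)) (γ : U → Set U)
    (hwf : GWF Sa Q Qf Q0 Δ γ) (hpure : PureG Sa Q Qf Q0 Δ γ)
    (t : List (TSym U)) (ht : t ∈ TreeSet Sa) (n : ℕ) :
    (∀ v, relPow (GMove Q0 Δ γ) n t v →
      ∃ v', relPow (NMove Q0 (subsetRules Sa γ Δ Q)) n (treeRel sing t) v' ∧
        Inst v (GammaMap (gammaExt Sa γ) v')) ∧
    (∀ v', relPow (NMove Q0 (subsetRules Sa γ Δ Q)) n (treeRel sing t) v' →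
      ∀ v, Inst v (GammaMap (gammaExt Sa γ) v') →
        relPow (GMove Q0 Δ γ) n t v) := by
  obtain ⟨hQfin, hSaQ, hQfQ, hQ0Q, hΔ, hγQ⟩ := hwf
  obtain ⟨hΔpure, hγSa, hγpure, hQ0p, hQfp⟩ := hpure
  have hQ0Sa : ∀ a ∈ Q0, a ∉ Sa := fun a h => (hQ0p h).2
  have hΔQ : ∀ p ∈ Δ, p.2.2 ∈ Q := fun p hp => (hΔ p hp).2.2
  have hΔSa : ∀ p ∈ Δ, p.2.2 ∉ Sa := fun p hp => (hΔpure p hp).2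
  have htmem := tree_mem ht
  have hSOK : SOK Q Sa (treeRel sing t) := by
    apply sok_of_mem
    intro x hx
    rw [treeRel] at hx
    obtain ⟨y, hy, rfl⟩ := List.mem_map.mp hx
    rcases htmem y hy with rfl | rfl | hyS
    · exact Or.inl rfl
    · exact Or.inr (Or.inl rfl)
    · obtain ⟨a, haSa, rfl⟩ := hyS
      exact Or.inr (Or.inr ⟨{a}, rfl, Set.singleton_subset_iff.mpr (hSaQ haSa)⟩)
  have hfix : GammaMap (gammaExt Sa γ) (treeRel sing t) = treeRel sing t := by
    apply gamma_fix
    · intro x hx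
      rw [treeRel] at hx
      obtain ⟨y, hy, rfl⟩ := List.mem_map.mp hx
      rcases htmem y hy with rfl | rfl | ⟨a, _, rfl⟩ <;> simp [symRel]
    · intro A hA
      rw [treeRel] at hA
      obtain ⟨y, hy, hEq⟩ := List.mem_map.mp hA
      rcases htmem y hy with rfl | rfl | ⟨a, haSa, rfl⟩
      · exact absurd hEq (by simp [symRel])
      · exact absurd hEq (by simp [symRel])
      · have hAa : A = {a} := by
          have : TSym.ltr ({a} : Set U) = TSym.ltr A := by simpa [symRel, sing] using hEq
          cases this; rfl
        rw [hAa]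
        exact gammaExt_sing hγSa haSa
  have hinst : Inst t (GammaMap (gammaExt Sa γ) (treeRel sing t)) := by
    rw [hfix]; exact inst_treeRel t
  constructor
  · intro v hv
    exact fwd_n hQ0Q hQ0Sa hΔQ hΔSa n t (treeRel sing t) hinst hSOK v hv
  · intro v' hv' v hiv
    obtain ⟨u, hiu, hu⟩ := bwd_n hQ0Q hQ0Sa hΔQ hΔSa n (treeRel sing t) hSOK v' hv' v hiv
    have hut : u = t := inst_treeRel_eq (by rwa [hfix] at hiu)
    exact hut ▸ hu

end StringTree
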